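/- Let r, t be positive integers, Σ an r×t real rectangular diagonal matrix with nonnegative diagonal entries, D a t×t real diagonal matrix with nonnegative diagonal entries d₁₁,…,d_{tt}, and ε > 0. Then for every complex r×t matrix Δ with spectral norm ‖Δ‖₂ ≤ ε, the determinant det[I_t + (Σ+Δ)ᴴ(Σ+Δ)D] is a positive real number and satisfies det[I_t + (Σ+Δ)ᴴ(Σ+Δ)D] ≥ ∏_{j=1}^{min(t,r)} (1 + max{ςⱼⱼ − ε, 0}² dⱼⱼ). -/

import Mathlib

open Matrix

/-- The spectral norm (ℓ²→ℓ² operator norm, i.e. largest singular value) of a complex matrix. -/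
noncomputable def specNorm {m n : ℕ} (A : Matrix (Fin m) (Fin n) ℂ) : ℝ :=
  ‖LinearMap.toContinuousLinearMap (Matrix.toEuclideanLin A)‖

/-- The `j`-th diagonal entry of a rectangular matrix, extended by `0` out of range. -/
noncomputable def diagEntry {r t : ℕ} (S : Matrix (Fin r) (Fin t) ℝ) (j : ℕ) : ℝ :=
  if h : j < r ∧ j < t then S ⟨j, h.1⟩ ⟨j, h.2⟩ else 0

lemma star_dot_self {m : ℕ} (x : Fin m → ℂ) :
    star x ⬝ᵥ x = ((∑ i, Complex.normSq (x i) : ℝ) : ℂ) := by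
  simp [dotProduct, Complex.star_def, ← Complex.normSq_eq_conj_mul_self]

lemma sqrt_nsq_eq_norm {m : ℕ} (x : Fin m → ℂ) :
    Real.sqrt (∑ i, Complex.normSq (x i)) = ‖(WithLp.equiv 2 (Fin m → ℂ)).symm x‖ := by
  rw [EuclideanSpace.norm_eq]
  congr 1
  refine Finset.sum_congr rfl fun i _ => ?_
  rw [← Complex.sq_norm]; rfl

lemma nsq_triangle {m : ℕ} (a b : Fin m → ℂ) :
    Real.sqrt (∑ i, Complex.normSq ((a + b) i)) ≤
      Real.sqrt (∑ i, Complex.normSq (a i)) + Real.sqrt (∑ i, Complex.normSq (b i)) := by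
  rw [sqrt_nsq_eq_norm, sqrt_nsq_eq_norm, sqrt_nsq_eq_norm]
  have h : (WithLp.equiv 2 (Fin m → ℂ)).symm (a + b) =
      (WithLp.equiv 2 (Fin m → ℂ)).symm a + (WithLp.equiv 2 (Fin m → ℂ)).symm b := rfl
  rw [h]; exact norm_add_le _ _

lemma detConv {r k : ℕ} (M : Matrix (Fin r) (Fin k) ℂ) (d : Fin k → ℝ) (hd : ∀ j, 0 ≤ d j) :
    (1 + Mᴴ * M * Matrix.diagonal (fun j => ((d j : ℝ) : ℂ))).det =
      (1 + (M * Matrix.diagonal (fun j => ((Real.sqrt (d j) : ℝ) : ℂ)))ᴴ *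
        (M * Matrix.diagonal (fun j => ((Real.sqrt (d j) : ℝ) : ℂ)))).det := by
  set S : Matrix (Fin k) (Fin k) ℂ := Matrix.diagonal (fun j => ((Real.sqrt (d j) : ℝ) : ℂ)) with hS
  have hstar : star (fun j => ((Real.sqrt (d j) : ℝ) : ℂ)) = fun j => ((Real.sqrt (d j) : ℝ) : ℂ) := by
    funext j
    simp [Complex.star_def, Complex.conj_ofReal]
  have hSh : Sᴴ = S := by
    rw [hS, Matrix.diagonal_conjTranspose, hstar]
  have hfun : (fun j => ((Real.sqrt (d j) : ℝ) : ℂ) * ((Real.sqrt (d j) : ℝ) : ℂ)) =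
      fun j => ((d j : ℝ) : ℂ) := by
    funext j
    rw [← Complex.ofReal_mul, Real.mul_self_sqrt (hd j)]
  have hSS : S * S = Matrix.diagonal (fun j => ((d j : ℝ) : ℂ)) := by
    rw [hS, Matrix.diagonal_mul_diagonal, hfun]
  have h1 : (M * S)ᴴ * (M * S) = S * (Mᴴ * M * S) := by
    rw [Matrix.conjTranspose_mul, hSh, Matrix.mul_assoc S, ← Matrix.mul_assoc Mᴴ]
  rw [h1, Matrix.det_one_add_mul_comm S (Mᴴ * M * S), Matrix.mul_assoc (Mᴴ * M) S S, hSS]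

open scoped ComplexOrder in
lemma schur_step {r k : ℕ} (N : Matrix (Fin r) (Fin (k+1)) ℂ) :
    ∃ (α : Fin k → ℂ),
      (1 + Nᴴ * N).det =
        (1 + (N.submatrix id Fin.castSucc)ᴴ * (N.submatrix id Fin.castSucc)).det *
          (((1 + (∑ i, Complex.normSq ((N *ᵥ Fin.snoc (fun j => -(α j)) 1) i)) +
             ∑ j, Complex.normSq (α j) : ℝ)) : ℂ) := by
  set N' : Matrix (Fin r) (Fin k) ℂ := N.submatrix id Fin.castSucc with hN'
  set n0 : Fin r → ℂ := fun i => N i (Fin.last k) with hn0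
  set W : Matrix (Fin k) (Fin k) ℂ := 1 + N'ᴴ * N' with hWdef
  have hW : W.PosDef :=
    Matrix.PosDef.add_posSemidef Matrix.PosDef.one (Matrix.posSemidef_conjTranspose_mul_self N')
  haveI : Invertible W := W.invertibleOfIsUnitDet (isUnit_iff_ne_zero.2 (ne_of_gt hW.det_pos))
  set v : Fin k → ℂ := N'ᴴ *ᵥ n0 with hv
  set α : Fin k → ℂ := ⅟W *ᵥ v with hα
  refine ⟨α, ?_⟩
  have hWα : W *ᵥ α = v := by
    rw [hα, Matrix.mulVec_mulVec, mul_invOf_self, Matrix.one_mulVec]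
  set z : Fin r → ℂ := n0 - N' *ᵥ α with hz
  have hzvec : N *ᵥ Fin.snoc (fun j => -(α j)) 1 = z := by
    funext i
    rw [hz, Matrix.mulVec, dotProduct, Fin.sum_univ_castSucc]
    simp only [Fin.snoc_castSucc, Fin.snoc_last, mul_one, mul_neg, Pi.sub_apply]
    rw [hn0, hN']
    simp only [Matrix.mulVec, dotProduct, Matrix.submatrix_apply, id]
    rw [Finset.sum_neg_distrib]
    ring
  have e2 : star n0 ⬝ᵥ (N' *ᵥ α) = star v ⬝ᵥ α := by
    rw [Matrix.dotProduct_mulVec, hv, Matrix.star_mulVec, Matrix.conjTranspose_conjTranspose]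
  have e3 : star (N' *ᵥ α) ⬝ᵥ n0 = star α ⬝ᵥ v := by
    rw [Matrix.star_mulVec, ← Matrix.dotProduct_mulVec, hv]
  have e4 : star (N' *ᵥ α) ⬝ᵥ (N' *ᵥ α) = star α ⬝ᵥ v - star α ⬝ᵥ α := by
    rw [Matrix.star_mulVec, ← Matrix.dotProduct_mulVec, Matrix.mulVec_mulVec]
    have h5 : (N'ᴴ * N') *ᵥ α = W *ᵥ α - α := by
      rw [hWdef, Matrix.add_mulVec, Matrix.one_mulVec]
      abel
    rw [h5, hWα, dotProduct_sub]
  have expand : star z ⬝ᵥ z + star α ⬝ᵥ α = star n0 ⬝ᵥ n0 - star v ⬝ᵥ α := by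
    rw [hz, star_sub, sub_dotProduct, dotProduct_sub, dotProduct_sub, e2, e3, e4]
    ring
  have hscalar : (1 + star n0 ⬝ᵥ n0) - star v ⬝ᵥ α =
      (((1 + (∑ i, Complex.normSq (z i)) + ∑ j, Complex.normSq (α j) : ℝ)) : ℂ) := by
    have h6 : (1 + star n0 ⬝ᵥ n0) - star v ⬝ᵥ α = 1 + (star z ⬝ᵥ z + star α ⬝ᵥ α) := by
      rw [expand]; ring
    rw [h6, star_dot_self, star_dot_self]
    push_cast
    ring
  have hXblock : (1 + Nᴴ * N).submatrix finSumFinEquiv finSumFinEquiv =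
      Matrix.fromBlocks W (Matrix.of fun i (_ : Fin 1) => v i)
        (Matrix.of fun (_ : Fin 1) j => star (v j))
        (Matrix.of fun _ _ => 1 + star n0 ⬝ᵥ n0) := by
    have hlast : ∀ j : Fin 1, finSumFinEquiv (Sum.inr j : Fin k ⊕ Fin 1) = Fin.last k := by
      intro j
      apply Fin.ext
      simp [finSumFinEquiv_apply_right, Fin.last, Fin.fin_one_eq_zero j]
    ext i j
    rcases i with i | i <;> rcases j with j | j <;>
      simp only [Matrix.submatrix_apply, finSumFinEquiv_apply_left, hlast,
        Matrix.fromBlocks_apply₁₁, Matrix.fromBlocks_apply₁₂, Matrix.fromBlocks_apply₂₁,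
        Matrix.fromBlocks_apply₂₂, Matrix.add_apply, Matrix.one_apply, Matrix.mul_apply,
        Matrix.conjTranspose_apply, Matrix.of_apply]
    · rw [hWdef]
      simp only [Matrix.add_apply, Matrix.one_apply, Matrix.mul_apply,
        Matrix.conjTranspose_apply, hN', Matrix.submatrix_apply, id]
      congr 1
      rw [if_congr (by simp [Fin.ext_iff] :
        (Fin.castAdd 1 i = Fin.castAdd 1 j) ↔ i = j) rfl rfl]
    · have hne : Fin.castAdd 1 i ≠ Fin.last k := (Fin.castSucc_lt_last i).ne
      rw [if_neg hne, hv]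
      simp only [Matrix.mulVec, dotProduct, Matrix.conjTranspose_apply, hN',
        Matrix.submatrix_apply, id, hn0]
      rw [zero_add]
      rfl
    · have hne : Fin.last k ≠ Fin.castAdd 1 j := (Fin.castSucc_lt_last j).ne'
      rw [if_neg hne, hv]
      simp only [Matrix.mulVec, dotProduct, Matrix.conjTranspose_apply, hN',
        Matrix.submatrix_apply, id, hn0]
      rw [zero_add, star_sum]
      refine Finset.sum_congr rfl fun m _ => ?_
      rw [StarMul.star_mul, star_star]
      rfl
    · simp [dotProduct, hn0]
  have hCV : ((Matrix.of fun (_ : Fin 1) j => star (v j)) * ⅟W *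
      (Matrix.of fun i (_ : Fin 1) => v i)) 0 0 = star v ⬝ᵥ α := by
    rw [Matrix.mul_assoc, Matrix.mul_apply]
    simp only [Matrix.of_apply, Matrix.mul_apply]
    rw [hα]
    simp only [Matrix.mulVec, dotProduct, Pi.star_apply]
  have hdet : (1 + Nᴴ * N).det = W.det * ((1 + star n0 ⬝ᵥ n0) - star v ⬝ᵥ α) := by
    rw [← Matrix.det_submatrix_equiv_self finSumFinEquiv (1 + Nᴴ * N), hXblock,
      Matrix.det_fromBlocks₁₁, Matrix.det_fin_one]
    congr 1
    rw [Matrix.sub_apply, hCV, Matrix.of_apply]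
  rw [hdet, hscalar, hzvec, hWdef]

set_option maxHeartbeats 2000000 in
lemma lemB : ∀ (k r : ℕ) (M : Matrix (Fin r) (Fin k) ℂ) (ς d : Fin k → ℝ) (ε : ℝ),
    0 ≤ ε → (∀ j, 0 ≤ ς j) → (∀ j, 0 ≤ d j) →
    (∀ y : Fin k → ℂ,
      Real.sqrt (∑ j, ς j ^ 2 * Complex.normSq (y j)) ≤
        Real.sqrt (∑ i, Complex.normSq (M.mulVec y i)) +
          ε * Real.sqrt (∑ j, Complex.normSq (y j))) →
    ∃ x : ℝ,
      (1 + Mᴴ * M * Matrix.diagonal (fun j => ((d j : ℝ) : ℂ))).det = (x : ℂ) ∧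
      (∏ j, (1 + max (ς j - ε) 0 ^ 2 * d j)) ≤ x := by
  intro k
  induction k with
  | zero =>
    intro r M ς d ε hε hς hd H
    refine ⟨1, ?_, by simp⟩
    have h0 : (1 + Mᴴ * M * Matrix.diagonal fun j => ((d j : ℝ) : ℂ)) = 1 := by
      ext i j
      exact i.elim0
    rw [h0, Matrix.det_one, Complex.ofReal_one]
  | succ k ih =>
    intro r M ς d ε hε hς hd H
    obtain ⟨j₀, hj₀⟩ := Finite.exists_min ς
    set e : Equiv.Perm (Fin (k+1)) := Equiv.swap j₀ (Fin.last k) with he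
    set M₁ : Matrix (Fin r) (Fin (k+1)) ℂ := M.submatrix id e with hM₁
    set ς₁ : Fin (k+1) → ℝ := ς ∘ e with hς₁
    set d₁ : Fin (k+1) → ℝ := d ∘ e with hd₁def
    have hς₁0 : ∀ j, 0 ≤ ς₁ j := fun j => hς (e j)
    have hd₁0 : ∀ j, 0 ≤ d₁ j := fun j => hd (e j)
    have hmin : ∀ j, ς₁ (Fin.last k) ≤ ς₁ j := by
      intro j
      have h1 : ς₁ (Fin.last k) = ς j₀ := by
        rw [hς₁]
        simp only [Function.comp_apply, he]
        rw [Equiv.swap_apply_right]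
      rw [h1]
      exact hj₀ (e j)
    have H₁ : ∀ y : Fin (k+1) → ℂ,
        Real.sqrt (∑ j, ς₁ j ^ 2 * Complex.normSq (y j)) ≤
          Real.sqrt (∑ i, Complex.normSq (M₁.mulVec y i)) +
            ε * Real.sqrt (∑ j, Complex.normSq (y j)) := by
      intro y
      have hmv : M₁.mulVec y = M.mulVec (fun j => y (e.symm j)) := by
        funext i
        simp only [hM₁, Matrix.mulVec, dotProduct, Matrix.submatrix_apply, id]
        rw [← Equiv.sum_comp e (fun j' => M i j' * y (e.symm j'))]
        exact Finset.sum_congr rfl fun j _ => by rw [Equiv.symm_apply_apply]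
      have h1 : ∑ j, ς₁ j ^ 2 * Complex.normSq (y j) =
          ∑ j, ς j ^ 2 * Complex.normSq (y (e.symm j)) := by
        rw [← Equiv.sum_comp e (fun j' => ς j' ^ 2 * Complex.normSq (y (e.symm j')))]
        exact Finset.sum_congr rfl fun j _ => by rw [Equiv.symm_apply_apply]; rfl
      have h2 : ∑ j, Complex.normSq (y j) = ∑ j, Complex.normSq (y (e.symm j)) := by
        rw [← Equiv.sum_comp e (fun j' => Complex.normSq (y (e.symm j')))]
        exact Finset.sum_congr rfl fun j _ => by rw [Equiv.symm_apply_apply]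
      rw [hmv, h1, h2]
      exact H _
    have hdet₁ : (1 + M₁ᴴ * M₁ * Matrix.diagonal fun j => ((d₁ j : ℝ) : ℂ)).det
        = (1 + Mᴴ * M * Matrix.diagonal fun j => ((d j : ℝ) : ℂ)).det := by
      have h1 : M₁ᴴ * M₁ * Matrix.diagonal (fun j => ((d₁ j : ℝ) : ℂ))
          = (Mᴴ * M * Matrix.diagonal fun j => ((d j : ℝ) : ℂ)).submatrix ⇑e ⇑e := by
        have hdd : (fun j => ((d₁ j : ℝ) : ℂ)) = (fun j => ((d j : ℝ) : ℂ)) ∘ e := by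
          funext j; rfl
        rw [hM₁, Matrix.conjTranspose_submatrix, hdd, ← Matrix.submatrix_diagonal_equiv,
          ← Matrix.submatrix_mul Mᴴ M (⇑e) id (⇑e) Function.bijective_id,
          ← Matrix.submatrix_mul (Mᴴ * M) (Matrix.diagonal fun j => ((d j : ℝ) : ℂ))
            (⇑e) (⇑e) (⇑e) e.bijective]
      have hsub : (1 + M₁ᴴ * M₁ * Matrix.diagonal fun j => ((d₁ j : ℝ) : ℂ))
          = (1 + Mᴴ * M * Matrix.diagonal fun j => ((d j : ℝ) : ℂ)).submatrix ⇑e ⇑e := by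
        rw [h1]
        ext i j
        simp only [Matrix.submatrix_apply, Matrix.add_apply, Matrix.one_apply,
          EmbeddingLike.apply_eq_iff_eq]
      rw [hsub, Matrix.det_submatrix_equiv_self]
    have hprod₁ : (∏ j, (1 + max (ς₁ j - ε) 0 ^ 2 * d₁ j))
        = ∏ j, (1 + max (ς j - ε) 0 ^ 2 * d j) :=
      Equiv.prod_comp e (fun j => 1 + max (ς j - ε) 0 ^ 2 * d j)
    rw [← hdet₁, ← hprod₁]
    -- now work with M₁, ς₁, d₁
    set sdc : Fin (k+1) → ℂ := fun j => ((Real.sqrt (d₁ j) : ℝ) : ℂ) with hsdc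
    set N : Matrix (Fin r) (Fin (k+1)) ℂ := M₁ * Matrix.diagonal sdc with hN
    have hconv : (1 + M₁ᴴ * M₁ * Matrix.diagonal fun j => ((d₁ j : ℝ) : ℂ)).det
        = (1 + Nᴴ * N).det := detConv M₁ d₁ hd₁0
    obtain ⟨α, hschur⟩ := schur_step N
    -- sub data
    set M' : Matrix (Fin r) (Fin k) ℂ := M₁.submatrix id Fin.castSucc with hM'
    set ς' : Fin k → ℝ := ς₁ ∘ Fin.castSucc with hς'
    set d' : Fin k → ℝ := d₁ ∘ Fin.castSucc with hd'
    have hN'eq : N.submatrix id Fin.castSucc =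
        M' * Matrix.diagonal (fun j => ((Real.sqrt (d' j) : ℝ) : ℂ)) := by
      ext i j
      rw [Matrix.submatrix_apply, hN, Matrix.mul_diagonal, Matrix.mul_diagonal]
      rfl
    have hconv' : (1 + (N.submatrix id Fin.castSucc)ᴴ * (N.submatrix id Fin.castSucc)).det
        = (1 + M'ᴴ * M' * Matrix.diagonal fun j => ((d' j : ℝ) : ℂ)).det := by
      rw [hN'eq, ← detConv M' d' (fun j => hd₁0 _)]
    have H' : ∀ y : Fin k → ℂ,
        Real.sqrt (∑ j, ς' j ^ 2 * Complex.normSq (y j)) ≤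
          Real.sqrt (∑ i, Complex.normSq (M'.mulVec y i)) +
            ε * Real.sqrt (∑ j, Complex.normSq (y j)) := by
      intro y
      have hyext : M'.mulVec y = M₁.mulVec (Fin.snoc y 0) := by
        funext i
        simp only [hM', Matrix.mulVec, dotProduct, Matrix.submatrix_apply, id]
        rw [Fin.sum_univ_castSucc]
        simp [Fin.snoc_castSucc, Fin.snoc_last]
      have h1 : ∑ j, ς' j ^ 2 * Complex.normSq (y j) =
          ∑ j : Fin (k+1), ς₁ j ^ 2 * Complex.normSq ((Fin.snoc y 0 : Fin (k+1) → ℂ) j) := by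
        rw [Fin.sum_univ_castSucc]
        simp [Fin.snoc_castSucc, Fin.snoc_last]
        rfl
      have h2 : ∑ j, Complex.normSq (y j) =
          ∑ j : Fin (k+1), Complex.normSq ((Fin.snoc y 0 : Fin (k+1) → ℂ) j) := by
        rw [Fin.sum_univ_castSucc]
        simp [Fin.snoc_castSucc, Fin.snoc_last]
      rw [h1, h2, hyext]
      exact H₁ _
    obtain ⟨x', hx'det, hx'ge⟩ := ih r M' ς' d' ε hε (fun j => hς₁0 _) (fun j => hd₁0 _) H'
    -- the scalar
    set Sz : ℝ := ∑ i, Complex.normSq ((N *ᵥ Fin.snoc (fun j => -(α j)) 1) i) with hSzdef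
    set Sα : ℝ := ∑ j, Complex.normSq (α j) with hSαdef
    have hSz0 : 0 ≤ Sz := Finset.sum_nonneg fun i _ => Complex.normSq_nonneg _
    have hSα0 : 0 ≤ Sα := Finset.sum_nonneg fun i _ => Complex.normSq_nonneg _
    -- the key lower bound on the scalar
    have hkey : 1 + max (ς₁ (Fin.last k) - ε) 0 ^ 2 * d₁ (Fin.last k) ≤ 1 + Sz + Sα := by
      rcases le_or_gt (ς₁ (Fin.last k)) ε with hle | hlt
      · rw [max_eq_right (by linarith)]
        simp only [ne_eq, OfNat.ofNat_ne_zero, not_false_eq_true, zero_pow, zero_mul, add_zero]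
        linarith
      · rw [max_eq_left (by linarith)]
        set c : ℝ := ς₁ (Fin.last k) - ε with hc
        have hc0 : 0 ≤ c := by linarith
        set yh : Fin (k+1) → ℂ := Fin.snoc (fun j => -(α j)) 1 with hyh
        set yv : Fin (k+1) → ℂ := fun j => sdc j * yh j with hyv
        have hzy : N *ᵥ yh = M₁.mulVec yv := by
          have hdv : Matrix.diagonal sdc *ᵥ yh = yv := by
            funext j
            rw [Matrix.mulVec_diagonal]
          rw [hN, ← Matrix.mulVec_mulVec, hdv]
        set Q : ℝ := ∑ j, Complex.normSq (yv j) with hQ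
        have hnsqyv : ∀ j, Complex.normSq (yv j) = d₁ j * Complex.normSq (yh j) := by
          intro j
          rw [hyv]
          simp only [Complex.normSq_mul, hsdc, Complex.normSq_ofReal]
          rw [Real.mul_self_sqrt (hd₁0 j)]
        have hQd : d₁ (Fin.last k) ≤ Q := by
          rw [hQ]
          have : d₁ (Fin.last k) = Complex.normSq (yv (Fin.last k)) := by
            rw [hnsqyv, hyh]
            simp [Fin.snoc_last]
          rw [this]
          exact Finset.single_le_sum (fun j _ => Complex.normSq_nonneg _) (Finset.mem_univ _)
        have hQ0 : 0 ≤ Q := Finset.sum_nonneg fun j _ => Complex.normSq_nonneg _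
        have hlow : ς₁ (Fin.last k) ^ 2 * Q ≤ ∑ j, ς₁ j ^ 2 * Complex.normSq (yv j) := by
          rw [hQ, Finset.mul_sum]
          refine Finset.sum_le_sum fun j _ => ?_
          exact mul_le_mul_of_nonneg_right
            (pow_le_pow_left₀ (hς₁0 _) (hmin j) 2) (Complex.normSq_nonneg _)
        have hH := H₁ yv
        have hsq1 : ς₁ (Fin.last k) * Real.sqrt Q ≤
            Real.sqrt (∑ j, ς₁ j ^ 2 * Complex.normSq (yv j)) := by
          have := Real.sqrt_le_sqrt hlow
          rwa [Real.sqrt_mul (sq_nonneg _), Real.sqrt_sq (hς₁0 _)] at this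
        have hbz : c * Real.sqrt Q ≤ Real.sqrt Sz := by
          have h3 : Real.sqrt (∑ i, Complex.normSq ((M₁.mulVec yv) i)) = Real.sqrt Sz := by
            rw [hSzdef, ← hzy]
          nlinarith [hH, hsq1, h3, Real.sqrt_nonneg Q]
        have hfin : c ^ 2 * d₁ (Fin.last k) ≤ Sz := by
          have h4 : c * Real.sqrt (d₁ (Fin.last k)) ≤ c * Real.sqrt Q :=
            mul_le_mul_of_nonneg_left (Real.sqrt_le_sqrt hQd) hc0
          have h5 : c * Real.sqrt (d₁ (Fin.last k)) ≤ Real.sqrt Sz := le_trans h4 hbz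
          have h6 : (c * Real.sqrt (d₁ (Fin.last k))) ^ 2 ≤ Sz := by
            nlinarith [Real.sq_sqrt hSz0, Real.sqrt_nonneg Sz, h5,
              mul_nonneg hc0 (Real.sqrt_nonneg (d₁ (Fin.last k)))]
          rw [mul_pow, Real.sq_sqrt (hd₁0 _)] at h6
          exact h6
        linarith
    -- assemble
    refine ⟨x' * (1 + Sz + Sα), ?_, ?_⟩
    · rw [hconv, hschur, hconv', hx'det]
      norm_cast
    · have hsplit : (∏ j : Fin (k+1), (1 + max (ς₁ j - ε) 0 ^ 2 * d₁ j)) =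
          (∏ j, (1 + max (ς' j - ε) 0 ^ 2 * d' j)) *
            (1 + max (ς₁ (Fin.last k) - ε) 0 ^ 2 * d₁ (Fin.last k)) := by
        rw [Fin.prod_univ_castSucc]
        rfl
      have hf0 : (0:ℝ) ≤ 1 + max (ς₁ (Fin.last k) - ε) 0 ^ 2 * d₁ (Fin.last k) := by
        have := mul_nonneg (sq_nonneg (max (ς₁ (Fin.last k) - ε) 0)) (hd₁0 (Fin.last k))
        linarith
      have hx'0 : (0:ℝ) ≤ x' := by
        refine le_trans (Finset.prod_nonneg fun j _ => ?_) hx'ge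
        have hdj : (0:ℝ) ≤ d' j := hd₁0 (Fin.castSucc j)
        have := mul_nonneg (sq_nonneg (max (ς' j - ε) 0)) hdj
        linarith
      rw [hsplit]
      exact mul_le_mul hx'ge hkey hf0 hx'0

set_option maxHeartbeats 1000000 in
theorem stmt1 (r t : ℕ) (hr : 0 < r) (ht : 0 < t)
    (Sig : Matrix (Fin r) (Fin t) ℝ)
    (hSdiag : ∀ (i : Fin r) (j : Fin t), (i : ℕ) ≠ (j : ℕ) → Sig i j = 0)
    (hSpos : ∀ j, 0 ≤ diagEntry Sig j)
    (d : Fin t → ℝ) (hd : ∀ i, 0 ≤ d i)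
    (ε : ℝ) (hε : 0 < ε)
    (Δ : Matrix (Fin r) (Fin t) ℂ) (hΔ : specNorm Δ ≤ ε) :
    let SigC : Matrix (Fin r) (Fin t) ℂ := Sig.map Complex.ofReal
    let D : Matrix (Fin t) (Fin t) ℂ := Matrix.diagonal fun i => (d i : ℂ)
    0 < ((1 + (SigC + Δ)ᴴ * (SigC + Δ) * D).det).re ∧
    ((1 + (SigC + Δ)ᴴ * (SigC + Δ) * D).det).im = 0 ∧
    (∏ j : Fin (min r t),
        (1 + max (diagEntry Sig j - ε) 0 ^ 2 * d (Fin.castLE (min_le_right r t) j))) ≤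
      ((1 + (SigC + Δ)ᴴ * (SigC + Δ) * D).det).re := by
  intro SigC D
  have hDeq : D = Matrix.diagonal fun j => ((d j : ℝ) : ℂ) := rfl
  have hSCeq : SigC = Sig.map Complex.ofReal := rfl
  rw [hDeq, hSCeq]
  set Mtot : Matrix (Fin r) (Fin t) ℂ := Sig.map Complex.ofReal + Δ with hMtot
  set ςf : Fin t → ℝ := fun j => diagEntry Sig (j : ℕ) with hςf
  have hς0 : ∀ j, 0 ≤ ςf j := fun j => hSpos _
  -- opnorm bound for Δ
  have hΔ' : ∀ y : Fin t → ℂ,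
      Real.sqrt (∑ i, Complex.normSq ((Δ *ᵥ y) i)) ≤
        ε * Real.sqrt (∑ j, Complex.normSq (y j)) := by
    intro y
    rw [sqrt_nsq_eq_norm, sqrt_nsq_eq_norm]
    have h1 : (WithLp.equiv 2 (Fin r → ℂ)).symm (Δ *ᵥ y) =
        (LinearMap.toContinuousLinearMap (Matrix.toEuclideanLin Δ))
          ((WithLp.equiv 2 (Fin t → ℂ)).symm y) := rfl
    rw [h1]
    calc ‖(LinearMap.toContinuousLinearMap (Matrix.toEuclideanLin Δ))
            ((WithLp.equiv 2 (Fin t → ℂ)).symm y)‖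
        ≤ specNorm Δ * ‖(WithLp.equiv 2 (Fin t → ℂ)).symm y‖ :=
          (LinearMap.toContinuousLinearMap (Matrix.toEuclideanLin Δ)).le_opNorm _
      _ ≤ ε * ‖(WithLp.equiv 2 (Fin t → ℂ)).symm y‖ :=
          mul_le_mul_of_nonneg_right hΔ (norm_nonneg _)
  -- per-vector identity for the Sigma part
  have hSig : ∀ y : Fin t → ℂ,
      (∑ i, Complex.normSq ((Sig.map Complex.ofReal *ᵥ y) i)) =
        ∑ j, ςf j ^ 2 * Complex.normSq (y j) := by
    intro y
    set F : ℕ → ℝ := fun n => if h : n < r ∧ n < t then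
        diagEntry Sig n ^ 2 * Complex.normSq (y ⟨n, h.2⟩) else 0 with hF
    have hrow : ∀ i : Fin r, Complex.normSq ((Sig.map Complex.ofReal *ᵥ y) i) = F (i : ℕ) := by
      intro i
      by_cases hit : (i : ℕ) < t
      · have hmv : (Sig.map Complex.ofReal *ᵥ y) i =
            ((Sig i ⟨(i : ℕ), hit⟩ : ℝ) : ℂ) * y ⟨(i : ℕ), hit⟩ := by
          rw [Matrix.mulVec, dotProduct]
          rw [Finset.sum_eq_single (⟨(i : ℕ), hit⟩ : Fin t)]
          · simp [Matrix.map_apply]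
          · intro b _ hb
            have hzero : Sig i b = 0 := hSdiag i b (fun hh => hb (Fin.ext hh.symm))
            simp [Matrix.map_apply, hzero]
          · intro h
            exact absurd (Finset.mem_univ _) h
        rw [hmv, Complex.normSq_mul, Complex.normSq_ofReal]
        simp only [hF]
        rw [dif_pos (⟨i.isLt, hit⟩ : (i : ℕ) < r ∧ (i : ℕ) < t)]
        have hde : diagEntry Sig (i : ℕ) = Sig i ⟨(i : ℕ), hit⟩ := by
          unfold diagEntry
          rw [dif_pos (⟨i.isLt, hit⟩ : (i : ℕ) < r ∧ (i : ℕ) < t)]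
        rw [hde, pow_two]
      · have hmv : (Sig.map Complex.ofReal *ᵥ y) i = 0 := by
          rw [Matrix.mulVec, dotProduct]
          refine Finset.sum_eq_zero fun b _ => ?_
          have hzero : Sig i b = 0 := hSdiag i b (by omega)
          simp [Matrix.map_apply, hzero]
        rw [hmv]
        simp only [hF]
        rw [dif_neg (by omega : ¬((i : ℕ) < r ∧ (i : ℕ) < t))]
        simp
    have hcol : ∀ j : Fin t, ςf j ^ 2 * Complex.normSq (y j) = F (j : ℕ) := by
      intro j
      by_cases hjr : (j : ℕ) < r
      · simp only [hF]
        rw [dif_pos (⟨hjr, j.isLt⟩ : (j : ℕ) < r ∧ (j : ℕ) < t)]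
      · have h0 : ςf j = 0 := by
          simp only [hςf]
          unfold diagEntry
          rw [dif_neg (by omega : ¬((j : ℕ) < r ∧ (j : ℕ) < t))]
        rw [h0]
        simp only [hF]
        rw [dif_neg (by omega : ¬((j : ℕ) < r ∧ (j : ℕ) < t))]
        ring
    calc (∑ i, Complex.normSq ((Sig.map Complex.ofReal *ᵥ y) i))
        = ∑ i : Fin r, F (i : ℕ) := Finset.sum_congr rfl fun i _ => hrow i
      _ = ∑ n ∈ Finset.range r, F n := Fin.sum_univ_eq_sum_range F r
      _ = ∑ n ∈ Finset.range (min r t), F n := by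
          refine (Finset.sum_subset (Finset.range_subset_range.2 (min_le_left r t))
            fun n hn hn' => ?_).symm
          rw [Finset.mem_range] at hn
          rw [Finset.mem_range] at hn'
          simp only [hF]
          rw [dif_neg (by omega : ¬(n < r ∧ n < t))]
      _ = ∑ n ∈ Finset.range t, F n := by
          refine Finset.sum_subset (Finset.range_subset_range.2 (min_le_right r t))
            fun n hn hn' => ?_
          rw [Finset.mem_range] at hn
          rw [Finset.mem_range] at hn'
          simp only [hF]
          rw [dif_neg (by omega : ¬(n < r ∧ n < t))]
      _ = ∑ j : Fin t, F (j : ℕ) := (Fin.sum_univ_eq_sum_range F t).symm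
      _ = ∑ j, ςf j ^ 2 * Complex.normSq (y j) :=
          Finset.sum_congr rfl fun j _ => (hcol j).symm
  -- main hypothesis for lemB
  have H : ∀ y : Fin t → ℂ,
      Real.sqrt (∑ j, ςf j ^ 2 * Complex.normSq (y j)) ≤
        Real.sqrt (∑ i, Complex.normSq ((Mtot *ᵥ y) i)) +
          ε * Real.sqrt (∑ j, Complex.normSq (y j)) := by
    intro y
    have hsplit : Sig.map Complex.ofReal *ᵥ y = Mtot *ᵥ y + (-Δ) *ᵥ y := by
      rw [hMtot, Matrix.add_mulVec, Matrix.neg_mulVec]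
      abel
    have h2 : Real.sqrt (∑ i, Complex.normSq (((-Δ) *ᵥ y) i)) ≤
        ε * Real.sqrt (∑ j, Complex.normSq (y j)) := by
      have hneg : ∀ i, Complex.normSq (((-Δ) *ᵥ y) i) = Complex.normSq ((Δ *ᵥ y) i) := by
        intro i
        rw [Matrix.neg_mulVec, Pi.neg_apply, Complex.normSq_neg]
      calc Real.sqrt (∑ i, Complex.normSq (((-Δ) *ᵥ y) i))
          = Real.sqrt (∑ i, Complex.normSq ((Δ *ᵥ y) i)) := by
            rw [Finset.sum_congr rfl fun i _ => hneg i]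
        _ ≤ ε * Real.sqrt (∑ j, Complex.normSq (y j)) := hΔ' y
    calc Real.sqrt (∑ j, ςf j ^ 2 * Complex.normSq (y j))
        = Real.sqrt (∑ i, Complex.normSq ((Sig.map Complex.ofReal *ᵥ y) i)) := by
          rw [hSig]
      _ = Real.sqrt (∑ i, Complex.normSq (((Mtot *ᵥ y) + ((-Δ) *ᵥ y)) i)) := by
          rw [← hsplit]
      _ ≤ Real.sqrt (∑ i, Complex.normSq ((Mtot *ᵥ y) i)) +
            Real.sqrt (∑ i, Complex.normSq (((-Δ) *ᵥ y) i)) := nsq_triangle _ _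
      _ ≤ Real.sqrt (∑ i, Complex.normSq ((Mtot *ᵥ y) i)) +
            ε * Real.sqrt (∑ j, Complex.normSq (y j)) := by linarith
  obtain ⟨x, hdet, hge⟩ := lemB t r Mtot ςf d ε hε.le hς0 hd H
  -- the product over Fin (min r t) agrees with the product over Fin t
  set G : ℕ → ℝ := fun n => if h : n < t then
      1 + max (diagEntry Sig n - ε) 0 ^ 2 * d ⟨n, h⟩ else 1 with hG
  have hPlem : (∏ j, (1 + max (ςf j - ε) 0 ^ 2 * d j)) = ∏ n ∈ Finset.range t, G n := by
    rw [← Fin.prod_univ_eq_prod_range G t]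
    refine Finset.prod_congr rfl fun j _ => ?_
    simp only [hG]
    rw [dif_pos j.isLt]
  have hPgoal : (∏ j : Fin (min r t),
      (1 + max (diagEntry Sig (j : ℕ) - ε) 0 ^ 2 * d (Fin.castLE (min_le_right r t) j)))
      = ∏ n ∈ Finset.range (min r t), G n := by
    rw [← Fin.prod_univ_eq_prod_range G (min r t)]
    refine Finset.prod_congr rfl fun j _ => ?_
    simp only [hG]
    rw [dif_pos (lt_of_lt_of_le j.isLt (min_le_right r t))]
    rfl
  have hPsub : ∏ n ∈ Finset.range (min r t), G n = ∏ n ∈ Finset.range t, G n := by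
    refine Finset.prod_subset (Finset.range_subset_range.2 (min_le_right r t))
      fun n hn hn' => ?_
    rw [Finset.mem_range] at hn
    rw [Finset.mem_range] at hn'
    have hnr : ¬ n < r := by omega
    have hde : diagEntry Sig n = 0 := by
      unfold diagEntry
      rw [dif_neg (by omega : ¬(n < r ∧ n < t))]
    simp only [hG]
    rw [dif_pos hn, hde]
    rw [max_eq_right (by linarith : (0:ℝ) - ε ≤ 0)]
    ring
  have hone : (1:ℝ) ≤ ∏ j, (1 + max (ςf j - ε) 0 ^ 2 * d j) := by
    have h := Finset.prod_le_prod (s := Finset.univ) (f := fun _ : Fin t => (1:ℝ))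
      (g := fun j => 1 + max (ςf j - ε) 0 ^ 2 * d j) (fun i _ => zero_le_one)
      (fun j _ => by nlinarith [mul_nonneg (sq_nonneg (max (ςf j - ε) 0)) (hd j)])
    simpa using h
  refine ⟨?_, ?_, ?_⟩
  · rw [hdet, Complex.ofReal_re]
    linarith
  · rw [hdet, Complex.ofReal_im]
  · rw [hdet, Complex.ofReal_re, hPgoal, hPsub, ← hPlem]
    exact hge
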